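/- Let S(x) = Σ_{u=0}^{2p^m q^n - 1} s_u x^u ∈ F_4[x] be the generating polynomial of the quaternary generalized cyclotomic sequence S. Then S(1) = e; in particular S(1) ≠ 0. -/

import Mathlib

open Finset Polynomial

noncomputable section

/-- The field `F₄` with four elements. -/
abbrev F4 : Type := GaloisField 2 2

/-- Generic generalized cyclotomic class of index `0` modulo `M`:
`{ g^(2t) * y^k mod M : 0 ≤ t < dHalf, 0 ≤ k < e }`. -/
def GC0 (g y M dHalf e : ℕ) : Finset ℕ :=
  ((Finset.range dHalf) ×ˢ (Finset.range e)).image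
    (fun tk => g ^ (2 * tk.1) * y ^ tk.2 % M)

/-- Generic generalized cyclotomic class of index `1` modulo `M`: `g · GC0 (mod M)`. -/
def GC1 (g y M dHalf e : ℕ) : Finset ℕ :=
  (GC0 g y M dHalf e).image (fun x => g * x % M)

/-- Class of index `h ∈ {0,1}`. -/
def GC (h g y M dHalf e : ℕ) : Finset ℕ :=
  if h = 0 then GC0 g y M dHalf e else GC1 g y M dHalf e

/-- `e_{i,j} = gcd(p^{i-1}(p-1), q^{j-1}(q-1))`. -/
def eij (p q i j : ℕ) : ℕ := Nat.gcd (p ^ (i - 1) * (p - 1)) (q ^ (j - 1) * (q - 1))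

/-- `d_{i,j} = p^{i-1}(p-1) q^{j-1}(q-1) / e_{i,j}`. -/
def dij (p q i j : ℕ) : ℕ := p ^ (i - 1) * (p - 1) * (q ^ (j - 1) * (q - 1)) / eij p q i j

/-- `D_h^{(p^i q^j)}`. -/
def DPQ (p q g y h i j : ℕ) : Finset ℕ :=
  GC h g y (p ^ i * q ^ j) (dij p q i j / 2) (eij p q i j)

/-- `D_h^{(2 p^i q^j)}`. -/
def D2PQ (p q g y h i j : ℕ) : Finset ℕ :=
  GC h g y (2 * (p ^ i * q ^ j)) (dij p q i j / 2) (eij p q i j)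

/-- `D_h^{(p^i)}`. -/
def DP (p g h i : ℕ) : Finset ℕ := GC h g 1 (p ^ i) (p ^ (i - 1) * (p - 1) / 2) 1

/-- `D_h^{(2p^i)}`. -/
def D2P (p g h i : ℕ) : Finset ℕ := GC h g 1 (2 * p ^ i) (p ^ (i - 1) * (p - 1) / 2) 1

/-- `D_h^{(q^j)}`. -/
def DQ (q g h j : ℕ) : Finset ℕ := GC h g 1 (q ^ j) (q ^ (j - 1) * (q - 1) / 2) 1

/-- `D_h^{(2q^j)}`. -/
def D2Q (q g h j : ℕ) : Finset ℕ := GC h g 1 (2 * q ^ j) (q ^ (j - 1) * (q - 1) / 2) 1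

/-- `c · A`. -/
def scaled (c : ℕ) (A : Finset ℕ) : Finset ℕ := A.image (fun x => c * x)

/-- `H_h^{(p^i q^j)} = p^{m-i} q^{n-j} D_h^{(p^i q^j)}`. -/
def HPQ (p q m n g y h i j : ℕ) : Finset ℕ :=
  scaled (p ^ (m - i) * q ^ (n - j)) (DPQ p q g y h i j)

/-- `H_h^{(2 p^i q^j)} = p^{m-i} q^{n-j} D_h^{(2 p^i q^j)}`. -/
def H2PQ (p q m n g y h i j : ℕ) : Finset ℕ :=
  scaled (p ^ (m - i) * q ^ (n - j)) (D2PQ p q g y h i j)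

/-- `H_h^{(p^i)} = p^{m-i} q^n D_h^{(p^i)}`. -/
def HP (p q m n g h i : ℕ) : Finset ℕ := scaled (p ^ (m - i) * q ^ n) (DP p g h i)

/-- `H_h^{(2p^i)} = p^{m-i} q^n D_h^{(2p^i)}`. -/
def H2P (p q m n g h i : ℕ) : Finset ℕ := scaled (p ^ (m - i) * q ^ n) (D2P p g h i)

/-- `H_h^{(q^j)} = p^m q^{n-j} D_h^{(q^j)}`. -/
def HQ (p q m n g h j : ℕ) : Finset ℕ := scaled (p ^ m * q ^ (n - j)) (DQ q g h j)

/-- `H_h^{(2q^j)} = p^m q^{n-j} D_h^{(2q^j)}`. -/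
def H2Q (p q m n g h j : ℕ) : Finset ℕ := scaled (p ^ m * q ^ (n - j)) (D2Q q g h j)

/-- `⋃_{i,j} H_h^{(2p^i q^j)} ∪ ⋃_i H_h^{(2p^i)} ∪ ⋃_j H_h^{(2q^j)}`. -/
def UnionH (p q m n g y h : ℕ) : Finset ℕ :=
  ((Finset.Icc 1 m).biUnion fun i => (Finset.Icc 1 n).biUnion fun j => H2PQ p q m n g y h i j)
    ∪ ((Finset.Icc 1 m).biUnion fun i => H2P p q m n g h i)
    ∪ ((Finset.Icc 1 n).biUnion fun j => H2Q p q m n g h j)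

/-- `⋃_{i,j} 2H_h^{(p^i q^j)} ∪ ⋃_i 2H_h^{(p^i)} ∪ ⋃_j 2H_h^{(q^j)}`. -/
def Union2H (p q m n g y h : ℕ) : Finset ℕ :=
  ((Finset.Icc 1 m).biUnion fun i =>
      (Finset.Icc 1 n).biUnion fun j => scaled 2 (HPQ p q m n g y h i j))
    ∪ ((Finset.Icc 1 m).biUnion fun i => scaled 2 (HP p q m n g h i))
    ∪ ((Finset.Icc 1 n).biUnion fun j => scaled 2 (HQ p q m n g h j))

/-- The quaternary generalized cyclotomic sequence of period `2 p^m q^n`. -/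
def seqS (p q m n g y : ℕ) (a b c d e : F4) (u : ℕ) : F4 :=
  let v := u % (2 * (p ^ m * q ^ n))
  if v = 0 then 0
  else if v = p ^ m * q ^ n then e
  else if v ∈ UnionH p q m n g y 0 then a
  else if v ∈ UnionH p q m n g y 1 then b
  else if v ∈ Union2H p q m n g y 0 then c
  else if v ∈ Union2H p q m n g y 1 then d
  else 0

/-- The generating polynomial `S(x) = ∑_{u=0}^{2p^m q^n - 1} s_u x^u ∈ F₄[x]`. -/
def genPoly (p q m n g y : ℕ) (a b c d e : F4) : Polynomial F4 :=
  ∑ u ∈ Finset.range (2 * (p ^ m * q ^ n)),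
    Polynomial.C (seqS p q m n g y a b c d e u) * Polynomial.X ^ u

/-- The linear complexity of a sequence over a field: the least `L > 0` admitting a linear
recurrence `s_{u+L} = c_1 s_{u+L-1} + ⋯ + c_L s_u`. -/
def LinearComplexity {F : Type*} [Field F] (s : ℕ → F) : ℕ :=
  sInf {L | 0 < L ∧ ∃ c : Fin L → F,
    ∀ u, s (u + L) = ∑ i : Fin L, c i * s (u + L - 1 - (i : ℕ))}

lemma mod_mul_mod (g z M : ℕ) : g * (z % M) % M = g * z % M := by
  conv_rhs => rw [Nat.mul_mod]
  rw [Nat.mul_mod g (z % M), Nat.mod_mod_of_dvd _ dvd_rfl]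

lemma mem_GC0 {g y M dh e x : ℕ} :
    x ∈ GC0 g y M dh e ↔ ∃ t k, t < dh ∧ k < e ∧ x = g ^ (2*t) * y ^ k % M := by
  simp only [GC0, Finset.mem_image, Finset.mem_product, Finset.mem_range, Prod.exists]
  constructor
  · rintro ⟨t, k, ⟨ht, hk⟩, rfl⟩; exact ⟨t, k, ht, hk, rfl⟩
  · rintro ⟨t, k, ht, hk, rfl⟩; exact ⟨t, k, ⟨ht, hk⟩, rfl⟩

lemma mem_GC1 {g y M dh e x : ℕ} :
    x ∈ GC1 g y M dh e ↔ ∃ t k, t < dh ∧ k < e ∧ x = g ^ (2*t+1) * y ^ k % M := by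
  simp only [GC1, Finset.mem_image, mem_GC0]
  constructor
  · rintro ⟨w, ⟨t, k, ht, hk, rfl⟩, rfl⟩
    exact ⟨t, k, ht, hk, by rw [mod_mul_mod, ← mul_assoc, ← pow_succ']⟩
  · rintro ⟨t, k, ht, hk, rfl⟩
    exact ⟨g ^ (2*t) * y ^ k % M, ⟨t, k, ht, hk, rfl⟩, by rw [mod_mul_mod, ← mul_assoc, ← pow_succ']⟩

lemma GC_elt_form {h g y M dh e x : ℕ} (h01 : h = 0 ∨ h = 1) (hx : x ∈ GC h g y M dh e) :
    ∃ t k, x = g ^ (2*t+h) * y ^ k % M := by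
  rcases h01 with rfl | rfl
  · rw [GC, if_pos rfl] at hx
    obtain ⟨t, k, -, -, rfl⟩ := mem_GC0.mp hx
    exact ⟨t, k, rfl⟩
  · rw [GC, if_neg one_ne_zero] at hx
    obtain ⟨t, k, -, -, rfl⟩ := mem_GC1.mp hx
    exact ⟨t, k, rfl⟩

lemma GC_elt_not_dvd {h g y M dh e x : ℕ} (h01 : h = 0 ∨ h = 1) (hx : x ∈ GC h g y M dh e)
    {r : ℕ} (hr : r.Prime) (hrM : r ∣ M) (hrg : ¬ r ∣ g) (hry : ¬ r ∣ y) : ¬ r ∣ x := by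
  obtain ⟨t, k, rfl⟩ := GC_elt_form h01 hx
  rw [Nat.dvd_mod_iff hrM]
  intro hd
  rcases hr.dvd_mul.mp hd with hd | hd
  · exact hrg (hr.dvd_of_dvd_pow hd)
  · exact hry (hr.dvd_of_dvd_pow hd)

lemma GC_elt_odd {h g y M dh e x : ℕ} (h01 : h = 0 ∨ h = 1) (hx : x ∈ GC h g y M dh e)
    (hM : 2 ∣ M) (hg : Odd g) (hy : Odd y) : Odd x := by
  obtain ⟨t, k, rfl⟩ := GC_elt_form h01 hx
  have hz : Odd (g ^ (2*t+h) * y ^ k) := (hg.pow).mul (hy.pow)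
  rw [Nat.odd_iff] at hz ⊢
  rw [Nat.mod_mod_of_dvd _ hM, hz]

lemma GC_elt_lt {h g y M dh e x : ℕ} (h01 : h = 0 ∨ h = 1) (hx : x ∈ GC h g y M dh e)
    (hM : 0 < M) : x < M := by
  obtain ⟨t, k, rfl⟩ := GC_elt_form h01 hx
  exact Nat.mod_lt _ hM

lemma mem_UnionH {p q m n g y h u : ℕ} :
    u ∈ UnionH p q m n g y h ↔
      ((∃ i, (1 ≤ i ∧ i ≤ m) ∧ ∃ j, (1 ≤ j ∧ j ≤ n) ∧
          ∃ x ∈ GC h g y (2 * (p ^ i * q ^ j)) (dij p q i j / 2) (eij p q i j),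
            p ^ (m - i) * q ^ (n - j) * x = u) ∨
        ∃ i, (1 ≤ i ∧ i ≤ m) ∧
          ∃ x ∈ GC h g 1 (2 * p ^ i) (p ^ (i - 1) * (p - 1) / 2) 1,
            p ^ (m - i) * q ^ n * x = u) ∨
      ∃ j, (1 ≤ j ∧ j ≤ n) ∧
        ∃ x ∈ GC h g 1 (2 * q ^ j) (q ^ (j - 1) * (q - 1) / 2) 1,
          p ^ m * q ^ (n - j) * x = u := by
  simp only [UnionH, H2PQ, D2PQ, H2P, D2P, H2Q, D2Q, scaled, Finset.mem_union,
    Finset.mem_biUnion, Finset.mem_image, Finset.mem_Icc]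
lemma pow_succ_not_dvd {r c w : ℕ} (hr : 0 < r) (hw : ¬ r ∣ w) : ¬ r ^ (c+1) ∣ r ^ c * w := by
  rintro ⟨d, hd⟩
  apply hw
  refine ⟨d, ?_⟩
  have hpos : 0 < r ^ c := pow_pos hr c
  have : r ^ c * w = r ^ c * (r * d) := by rw [hd, pow_succ]; ring
  exact Nat.eq_of_mul_eq_mul_left hpos this

lemma exponent_eq {r a b w w' : ℕ} (hr : r.Prime) (h : r ^ a * w = r ^ b * w')
    (hw : ¬ r ∣ w) (hw' : ¬ r ∣ w') : a = b ∧ w = w' := by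
  have hw0 : w ≠ 0 := by rintro rfl; exact hw (dvd_zero r)
  have hw0' : w' ≠ 0 := by rintro rfl; exact hw' (dvd_zero r)
  have hab : a = b := by
    have := congrArg (fun z => z.factorization r) h
    simp only [Nat.factorization_mul (pow_ne_zero _ hr.pos.ne') hw0,
      Nat.factorization_mul (pow_ne_zero _ hr.pos.ne') hw0',
      Nat.Prime.factorization_pow hr, Finsupp.add_apply, Finsupp.single_eq_same,
      Nat.factorization_eq_zero_of_not_dvd hw, Nat.factorization_eq_zero_of_not_dvd hw'] at this
    omega
  subst hab
  exact ⟨rfl, Nat.eq_of_mul_eq_mul_left (pow_pos hr.pos _) h⟩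

lemma cross_contra {r : ℕ} (hr : r.Prime) {c e w u : ℕ} (hu : u = r ^ c * w) (hw : ¬ r ∣ w)
    (hd : r ^ e ∣ u) (hce : c < e) : False := by
  have h1 : r ^ (c+1) ∣ u := dvd_trans (pow_dvd_pow r (by omega)) hd
  rw [hu] at h1
  exact pow_succ_not_dvd hr.pos hw h1

lemma not_dvd_mul_pow {r s : ℕ} (hr : r.Prime) (hs : s.Prime) (hrs : r ≠ s)
    {b x : ℕ} (hx : ¬ r ∣ x) : ¬ r ∣ s ^ b * x := by
  intro hd
  rcases hr.dvd_mul.mp hd with hd | hd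
  · exact hrs ((Nat.prime_dvd_prime_iff_eq hr hs).mp (hr.dvd_of_dvd_pow hd))
  · exact hx hd

lemma pow_ne_pow_odd {Q : ℕ} (g : ℕ) (hpos : orderOf (g : ZMod Q) ≠ 0)
    (heven : Even (orderOf (g : ZMod Q))) (t k : ℕ) :
    (g : ZMod Q) ^ (2*t) ≠ (g : ZMod Q) ^ (2*k+1) := by
  intro h
  have hfin : IsOfFinOrder (g : ZMod Q) := by
    by_contra hc
    exact hpos (orderOf_eq_zero_iff.mpr hc)
  obtain ⟨u, hu⟩ := hfin.isUnit
  have hup : u ^ (2*t) = u ^ (2*k+1) := by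
    apply Units.ext
    push_cast [hu]
    exact h
  rw [pow_eq_pow_iff_modEq] at hup
  have horder : orderOf u = orderOf (g : ZMod Q) := by rw [← hu, orderOf_units]
  rw [horder] at hup
  obtain ⟨r, hr⟩ := heven
  have := hup.of_dvd (⟨r, by omega⟩ : (2:ℕ) ∣ orderOf (g : ZMod Q))
  simp [Nat.ModEq] at this

lemma GC01_disj {g y M dh e Q : ℕ} (hQM : Q ∣ M) (hy : (y : ZMod Q) = 1)
    (hpos : orderOf (g : ZMod Q) ≠ 0) (heven : Even (orderOf (g : ZMod Q))) :
    ∀ x, x ∈ GC 0 g y M dh e → x ∈ GC 1 g y M dh e → False := by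
  intro x hx0 hx1
  rw [GC, if_pos rfl, mem_GC0] at hx0
  rw [GC, if_neg one_ne_zero, mem_GC1] at hx1
  obtain ⟨t, k, -, -, rfl⟩ := hx0
  obtain ⟨t', k', -, -, hx⟩ := hx1
  have hmod : g ^ (2*t) * y ^ k ≡ g ^ (2*t'+1) * y ^ k' [MOD M] := by
    have h1 : g ^ (2*t) * y ^ k ≡ g ^ (2*t) * y ^ k % M [MOD M] := (Nat.mod_modEq _ _).symm
    have h2 : g ^ (2*t'+1) * y ^ k' % M ≡ g ^ (2*t'+1) * y ^ k' [MOD M] := Nat.mod_modEq _ _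
    exact (h1.trans (hx ▸ Nat.ModEq.refl _)).trans h2
  have hQ : g ^ (2*t) * y ^ k ≡ g ^ (2*t'+1) * y ^ k' [MOD Q] := hmod.of_dvd hQM
  have hcast : ((g ^ (2*t) * y ^ k : ℕ) : ZMod Q) = ((g ^ (2*t'+1) * y ^ k' : ℕ) : ZMod Q) :=
    (ZMod.natCast_eq_natCast_iff _ _ _).mpr hQ
  push_cast at hcast
  rw [hy] at hcast
  simp only [one_pow, mul_one] at hcast
  exact pow_ne_pow_odd g hpos heven t t' hcast

lemma not_prime_dvd_one {r : ℕ} (hr : r.Prime) : ¬ r ∣ 1 :=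
  fun h => hr.one_lt.ne' (Nat.dvd_one.mp h)

lemma UnionH_disj01 (p q m n g y : ℕ) (hp : p.Prime) (hq : q.Prime) (hpq : p ≠ q)
    (hpodd : Odd p) (hqodd : Odd q) (hm : 1 ≤ m) (hn : 1 ≤ n)
    (hpg : ¬ p ∣ g) (hqg : ¬ q ∣ g) (hpy : ¬ p ∣ y) (hqy : ¬ q ∣ y)
    (hg2p : ∀ i, 1 ≤ i → i ≤ m → orderOf (g : ZMod (2 * p ^ i)) = Nat.totient (2 * p ^ i))
    (hg2q : ∀ j, 1 ≤ j → j ≤ n → orderOf (g : ZMod (2 * q ^ j)) = Nat.totient (2 * q ^ j))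
    (hy1 : y ≡ 1 [MOD 2 * q ^ n]) :
    ∀ u, u ∈ UnionH p q m n g y 0 → u ∈ UnionH p q m n g y 1 → False := by
  have hp3 : 3 ≤ p := by
    have h2 := hp.two_le
    have h3 := Nat.odd_iff.mp hpodd
    omega
  have hq3 : 3 ≤ q := by
    have h2 := hq.two_le
    have h3 := Nat.odd_iff.mp hqodd
    omega
  have ordp : ∀ i, 1 ≤ i → i ≤ m →
      orderOf (g : ZMod (2*p^i)) ≠ 0 ∧ Even (orderOf (g : ZMod (2*p^i))) := by
    intro i h1 h2
    rw [hg2p i h1 h2]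
    have hpi : 3 ≤ p ^ i := le_trans hp3 (Nat.le_self_pow (by omega) p)
    exact ⟨(Nat.totient_pos.mpr (by positivity)).ne', Nat.totient_even (by omega)⟩
  have ordq : ∀ j, 1 ≤ j → j ≤ n →
      orderOf (g : ZMod (2*q^j)) ≠ 0 ∧ Even (orderOf (g : ZMod (2*q^j))) := by
    intro j h1 h2
    rw [hg2q j h1 h2]
    have hqj : 3 ≤ q ^ j := le_trans hq3 (Nat.le_self_pow (by omega) q)
    exact ⟨(Nat.totient_pos.mpr (by positivity)).ne', Nat.totient_even (by omega)⟩
  have hyQ : ∀ j, j ≤ n → (y : ZMod (2*q^j)) = 1 := by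
    intro j h2
    have h := hy1.of_dvd (mul_dvd_mul_left 2 (pow_dvd_pow q h2))
    have := (ZMod.natCast_eq_natCast_iff y 1 (2*q^j)).mpr h
    simpa using this
  intro u h0 h1
  rw [mem_UnionH] at h0 h1
  rcases h0 with (⟨i, ⟨hi1, hi2⟩, j, ⟨hj1, hj2⟩, x, hxGC, hxu⟩ |
      ⟨i, ⟨hi1, hi2⟩, x, hxGC, hxu⟩) | ⟨j, ⟨hj1, hj2⟩, x, hxGC, hxu⟩ <;>
    rcases h1 with (⟨i', ⟨hi1', hi2'⟩, j', ⟨hj1', hj2'⟩, x', hxGC', hxu'⟩ |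
        ⟨i', ⟨hi1', hi2'⟩, x', hxGC', hxu'⟩) | ⟨j', ⟨hj1', hj2'⟩, x', hxGC', hxu'⟩
  -- case PQ, PQ
  · have hpx : ¬ p ∣ x := GC_elt_not_dvd (Or.inl rfl) hxGC hp
      ((dvd_pow_self p (by omega : i ≠ 0)).trans ⟨2*q^j, by ring⟩) hpg hpy
    have hqx : ¬ q ∣ x := GC_elt_not_dvd (Or.inl rfl) hxGC hq
      ((dvd_pow_self q (by omega : j ≠ 0)).trans ⟨2*p^i, by ring⟩) hqg hqy
    have hpx' : ¬ p ∣ x' := GC_elt_not_dvd (Or.inr rfl) hxGC' hp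
      ((dvd_pow_self p (by omega : i' ≠ 0)).trans ⟨2*q^j', by ring⟩) hpg hpy
    have hqx' : ¬ q ∣ x' := GC_elt_not_dvd (Or.inr rfl) hxGC' hq
      ((dvd_pow_self q (by omega : j' ≠ 0)).trans ⟨2*p^i', by ring⟩) hqg hqy
    have heq : p^(m-i) * (q^(n-j) * x) = p^(m-i') * (q^(n-j') * x') := by
      rw [← mul_assoc, ← mul_assoc, hxu, hxu']
    obtain ⟨hii, hrest⟩ := exponent_eq hp heq (not_dvd_mul_pow hp hq hpq hpx)
      (not_dvd_mul_pow hp hq hpq hpx')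
    obtain ⟨hjj, hxx⟩ := exponent_eq hq hrest hqx hqx'
    have hi : i = i' := by omega
    have hj : j = j' := by omega
    subst hi; subst hj; subst hxx
    exact GC01_disj (⟨p^i, by ring⟩ : (2*q^j : ℕ) ∣ 2*(p^i*q^j)) (hyQ j hj2)
      (ordq j hj1 hj2).1 (ordq j hj1 hj2).2 x hxGC hxGC'
  -- case PQ, P
  · have hqx : ¬ q ∣ x := GC_elt_not_dvd (Or.inl rfl) hxGC hq
      ((dvd_pow_self q (by omega : j ≠ 0)).trans ⟨2*p^i, by ring⟩) hqg hqy
    have hpx : ¬ p ∣ x := GC_elt_not_dvd (Or.inl rfl) hxGC hp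
      ((dvd_pow_self p (by omega : i ≠ 0)).trans ⟨2*q^j, by ring⟩) hpg hpy
    exact cross_contra hq (by rw [← hxu]; ring : u = q^(n-j) * (p^(m-i)*x))
      (not_dvd_mul_pow hq hp hpq.symm hqx)
      (⟨p^(m-i')*x', by rw [← hxu']; ring⟩ : q^n ∣ u) (by omega)
  -- case PQ, Q
  · have hpx : ¬ p ∣ x := GC_elt_not_dvd (Or.inl rfl) hxGC hp
      ((dvd_pow_self p (by omega : i ≠ 0)).trans ⟨2*q^j, by ring⟩) hpg hpy
    exact cross_contra hp (by rw [← hxu]; ring : u = p^(m-i) * (q^(n-j)*x))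
      (not_dvd_mul_pow hp hq hpq hpx)
      (⟨q^(n-j')*x', by rw [← hxu']; ring⟩ : p^m ∣ u) (by omega)
  -- case P, PQ
  · have hqx' : ¬ q ∣ x' := GC_elt_not_dvd (Or.inr rfl) hxGC' hq
      ((dvd_pow_self q (by omega : j' ≠ 0)).trans ⟨2*p^i', by ring⟩) hqg hqy
    exact cross_contra hq (by rw [← hxu']; ring : u = q^(n-j') * (p^(m-i')*x'))
      (not_dvd_mul_pow hq hp hpq.symm hqx')
      (⟨p^(m-i)*x, by rw [← hxu]; ring⟩ : q^n ∣ u) (by omega)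
  -- case P, P
  · have hpx : ¬ p ∣ x := GC_elt_not_dvd (Or.inl rfl) hxGC hp
      ((dvd_pow_self p (by omega : i ≠ 0)).trans ⟨2, by ring⟩) hpg (not_prime_dvd_one hp)
    have hpx' : ¬ p ∣ x' := GC_elt_not_dvd (Or.inr rfl) hxGC' hp
      ((dvd_pow_self p (by omega : i' ≠ 0)).trans ⟨2, by ring⟩) hpg (not_prime_dvd_one hp)
    have heq : p^(m-i) * (q^n * x) = p^(m-i') * (q^n * x') := by
      rw [← mul_assoc, ← mul_assoc, hxu, hxu']
    obtain ⟨hii, hrest⟩ := exponent_eq hp heq (not_dvd_mul_pow hp hq hpq hpx)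
      (not_dvd_mul_pow hp hq hpq hpx')
    have hi : i = i' := by omega
    subst hi
    have hxx : x = x' := Nat.eq_of_mul_eq_mul_left (pow_pos hq.pos _) hrest
    subst hxx
    exact GC01_disj (dvd_refl (2*p^i)) (Nat.cast_one) (ordp i hi1 hi2).1 (ordp i hi1 hi2).2
      x hxGC hxGC'
  -- case P, Q
  · have hpx : ¬ p ∣ x := GC_elt_not_dvd (Or.inl rfl) hxGC hp
      ((dvd_pow_self p (by omega : i ≠ 0)).trans ⟨2, by ring⟩) hpg (not_prime_dvd_one hp)
    exact cross_contra hp (by rw [← hxu]; ring : u = p^(m-i) * (q^n*x))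
      (not_dvd_mul_pow hp hq hpq hpx)
      (⟨q^(n-j')*x', by rw [← hxu']; ring⟩ : p^m ∣ u) (by omega)
  -- case Q, PQ
  · have hpx' : ¬ p ∣ x' := GC_elt_not_dvd (Or.inr rfl) hxGC' hp
      ((dvd_pow_self p (by omega : i' ≠ 0)).trans ⟨2*q^j', by ring⟩) hpg hpy
    exact cross_contra hp (by rw [← hxu']; ring : u = p^(m-i') * (q^(n-j')*x'))
      (not_dvd_mul_pow hp hq hpq hpx')
      (⟨q^(n-j)*x, by rw [← hxu]; ring⟩ : p^m ∣ u) (by omega)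
  -- case Q, P
  · have hpx' : ¬ p ∣ x' := GC_elt_not_dvd (Or.inr rfl) hxGC' hp
      ((dvd_pow_self p (by omega : i' ≠ 0)).trans ⟨2, by ring⟩) hpg (not_prime_dvd_one hp)
    exact cross_contra hp (by rw [← hxu']; ring : u = p^(m-i') * (q^n*x'))
      (not_dvd_mul_pow hp hq hpq hpx')
      (⟨q^(n-j)*x, by rw [← hxu]; ring⟩ : p^m ∣ u) (by omega)
  -- case Q, Q
  · have hqx : ¬ q ∣ x := GC_elt_not_dvd (Or.inl rfl) hxGC hq
      ((dvd_pow_self q (by omega : j ≠ 0)).trans ⟨2, by ring⟩) hqg (not_prime_dvd_one hq)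
    have hqx' : ¬ q ∣ x' := GC_elt_not_dvd (Or.inr rfl) hxGC' hq
      ((dvd_pow_self q (by omega : j' ≠ 0)).trans ⟨2, by ring⟩) hqg (not_prime_dvd_one hq)
    have heq : q^(n-j) * (p^m * x) = q^(n-j') * (p^m * x') := by
      rw [← mul_assoc, ← mul_assoc, mul_comm (q^(n-j)) (p^m), mul_comm (q^(n-j')) (p^m),
        hxu, hxu']
    obtain ⟨hjj, hrest⟩ := exponent_eq hq heq (not_dvd_mul_pow hq hp hpq.symm hqx)
      (not_dvd_mul_pow hq hp hpq.symm hqx')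
    have hj : j = j' := by omega
    subst hj
    have hxx : x = x' := Nat.eq_of_mul_eq_mul_left (pow_pos hp.pos _) hrest
    subst hxx
    exact GC01_disj (dvd_refl (2*q^j)) (Nat.cast_one) (ordq j hj1 hj2).1 (ordq j hj1 hj2).2
      x hxGC hxGC'

lemma UnionH_elt (p q m n g y h : ℕ) (hp : p.Prime) (hq : q.Prime) (hpq : p ≠ q)
    (hpodd : Odd p) (hqodd : Odd q) (hgodd : Odd g) (hyodd : Odd y)
    (hpg : ¬ p ∣ g) (hqg : ¬ q ∣ g) (hpy : ¬ p ∣ y) (hqy : ¬ q ∣ y)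
    (h01 : h = 0 ∨ h = 1) :
    ∀ u ∈ UnionH p q m n g y h, Odd u ∧ u < 2*(p^m*q^n) ∧ u ≠ p^m*q^n := by
  have hpp : 0 < p := hp.pos
  have hqp : 0 < q := hq.pos
  intro u hu
  rw [mem_UnionH] at hu
  rcases hu with (⟨i, ⟨hi1, hi2⟩, j, ⟨hj1, hj2⟩, x, hxGC, hxu⟩ |
      ⟨i, ⟨hi1, hi2⟩, x, hxGC, hxu⟩) | ⟨j, ⟨hj1, hj2⟩, x, hxGC, hxu⟩
  · have hpx : ¬ p ∣ x := GC_elt_not_dvd h01 hxGC hp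
      ((dvd_pow_self p (by omega : i ≠ 0)).trans ⟨2*q^j, by ring⟩) hpg hpy
    have hxodd : Odd x := GC_elt_odd h01 hxGC ⟨p^i*q^j, rfl⟩ hgodd hyodd
    have hxlt : x < 2*(p^i*q^j) := GC_elt_lt h01 hxGC (by exact Nat.mul_pos two_pos (Nat.mul_pos (pow_pos hpp _) (pow_pos hqp _)))
    refine ⟨?_, ?_, ?_⟩
    · rw [← hxu]; exact ((hpodd.pow).mul (hqodd.pow)).mul hxodd
    · rw [← hxu]
      calc p^(m-i)*q^(n-j)*x < p^(m-i)*q^(n-j)*(2*(p^i*q^j)) :=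
            mul_lt_mul_of_pos_left hxlt (by exact Nat.mul_pos (pow_pos hpp _) (pow_pos hqp _))
        _ = 2*(p^m*q^n) := by
            rw [show 2*(p^m*q^n) = 2*((p^(m-i)*p^i)*(q^(n-j)*q^j)) by
              rw [← pow_add, ← pow_add, Nat.sub_add_cancel hi2, Nat.sub_add_cancel hj2]]
            ring
    · intro hP
      exact cross_contra hp (by rw [← hxu]; ring : u = p^(m-i) * (q^(n-j)*x))
        (not_dvd_mul_pow hp hq hpq hpx) (⟨q^n, hP⟩ : p^m ∣ u) (by omega)
  · have hpx : ¬ p ∣ x := GC_elt_not_dvd h01 hxGC hp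
      ((dvd_pow_self p (by omega : i ≠ 0)).trans ⟨2, by ring⟩) hpg (not_prime_dvd_one hp)
    have hxodd : Odd x := GC_elt_odd h01 hxGC ⟨p^i, rfl⟩ hgodd odd_one
    have hxlt : x < 2*p^i := GC_elt_lt h01 hxGC (by exact Nat.mul_pos two_pos (pow_pos hpp _))
    refine ⟨?_, ?_, ?_⟩
    · rw [← hxu]; exact ((hpodd.pow).mul (hqodd.pow)).mul hxodd
    · rw [← hxu]
      calc p^(m-i)*q^n*x < p^(m-i)*q^n*(2*p^i) := mul_lt_mul_of_pos_left hxlt (by exact Nat.mul_pos (pow_pos hpp _) (pow_pos hqp _))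
        _ = 2*(p^m*q^n) := by
            rw [show 2*(p^m*q^n) = 2*((p^(m-i)*p^i)*q^n) by
              rw [← pow_add, Nat.sub_add_cancel hi2]]
            ring
    · intro hP
      exact cross_contra hp (by rw [← hxu]; ring : u = p^(m-i) * (q^n*x))
        (not_dvd_mul_pow hp hq hpq hpx) (⟨q^n, hP⟩ : p^m ∣ u) (by omega)
  · have hqx : ¬ q ∣ x := GC_elt_not_dvd h01 hxGC hq
      ((dvd_pow_self q (by omega : j ≠ 0)).trans ⟨2, by ring⟩) hqg (not_prime_dvd_one hq)
    have hxodd : Odd x := GC_elt_odd h01 hxGC ⟨q^j, rfl⟩ hgodd odd_one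
    have hxlt : x < 2*q^j := GC_elt_lt h01 hxGC (by exact Nat.mul_pos two_pos (pow_pos hqp _))
    refine ⟨?_, ?_, ?_⟩
    · rw [← hxu]; exact ((hpodd.pow).mul (hqodd.pow)).mul hxodd
    · rw [← hxu]
      calc p^m*q^(n-j)*x < p^m*q^(n-j)*(2*q^j) := mul_lt_mul_of_pos_left hxlt (by exact Nat.mul_pos (pow_pos hpp _) (pow_pos hqp _))
        _ = 2*(p^m*q^n) := by
            rw [show 2*(p^m*q^n) = 2*(p^m*(q^(n-j)*q^j)) by
              rw [← pow_add, Nat.sub_add_cancel hj2]]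
            ring
    · intro hP
      exact cross_contra hq (by rw [← hxu]; ring : u = q^(n-j) * (p^m*x))
        (not_dvd_mul_pow hq hp hpq.symm hqx) (⟨p^m, by rw [hP]; ring⟩ : q^n ∣ u) (by omega)

lemma scaled_GC1 (s g y M dh e : ℕ) :
    scaled s (GC 1 g y M dh e) = (scaled s (GC 0 g y M dh e)).image (fun u => g * u % (s*M)) := by
  rw [GC, if_neg one_ne_zero, GC, if_pos rfl, GC1]
  unfold scaled GC0
  rw [Finset.image_image, Finset.image_image, Finset.image_image, Finset.image_image]
  congr 1
  funext tk
  show s * (g * (g ^ (2 * tk.1) * y ^ tk.2 % M) % M) = g * (s * (g ^ (2 * tk.1) * y ^ tk.2 % M)) % (s * M)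
  rw [show g * (s * (g ^ (2 * tk.1) * y ^ tk.2 % M)) = s * (g * (g ^ (2 * tk.1) * y ^ tk.2 % M)) by ring,
    Nat.mul_mod_mul_left]

lemma scaled2_scaled_GC (h s M₀ g y dh e : ℕ) (h01 : h = 0 ∨ h = 1) :
    scaled 2 (scaled s (GC h g y M₀ dh e)) =
      (scaled s (GC h g y (2*M₀) dh e)).image (fun u => 2 * (u % (s*M₀))) := by
  have key : ∀ z : ℕ, 2 * (s * (z % (2*M₀)) % (s*M₀)) = 2 * (s * (z % M₀)) := by
    intro z
    rw [Nat.mul_mod_mul_left, Nat.mod_mod_of_dvd _ ⟨2, by ring⟩]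
  rcases h01 with rfl | rfl
  · rw [GC, if_pos rfl, GC, if_pos rfl]
    unfold scaled GC0
    rw [Finset.image_image, Finset.image_image, Finset.image_image, Finset.image_image]
    congr 1
    funext tk
    exact (key _).symm
  · rw [GC, if_neg one_ne_zero, GC, if_neg one_ne_zero]
    simp only [GC1]
    unfold scaled GC0
    simp only [Finset.image_image]
    apply Finset.image_congr
    intro tk _
    show 2 * (s * (g * (g ^ (2 * tk.1) * y ^ tk.2 % M₀) % M₀)) =
      2 * (s * (g * (g ^ (2 * tk.1) * y ^ tk.2 % (2*M₀)) % (2*M₀)) % (s*M₀))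
    rw [key, mod_mul_mod]
    conv_rhs => rw [Nat.mul_mod, Nat.mod_mod_of_dvd _ (⟨2, by ring⟩ : M₀ ∣ 2*M₀), ← Nat.mul_mod]

lemma pq_pow_eq (p q m n i j : ℕ) (hi : i ≤ m) (hj : j ≤ n) :
    (p^(m-i)*q^(n-j)) * (p^i*q^j) = p^m*q^n := by
  rw [show p^m*q^n = (p^(m-i)*p^i)*(q^(n-j)*q^j) by
    rw [← pow_add, ← pow_add, Nat.sub_add_cancel hi, Nat.sub_add_cancel hj]]
  ring

lemma UnionH_one (p q m n g y : ℕ) :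
    UnionH p q m n g y 1 =
      (UnionH p q m n g y 0).image (fun u => g * u % (2*(p^m*q^n))) := by
  unfold UnionH
  rw [Finset.image_union, Finset.image_union]
  simp only [Finset.biUnion_image]
  refine congrArg₂ (· ∪ ·) (congrArg₂ (· ∪ ·) ?_ ?_) ?_
  · refine Finset.biUnion_congr rfl (fun i hi => ?_)
    refine Finset.biUnion_congr rfl (fun j hj => ?_)
    rw [Finset.mem_Icc] at hi hj
    unfold H2PQ D2PQ
    rw [scaled_GC1]
    rw [show (p^(m-i)*q^(n-j)) * (2*(p^i*q^j)) = 2*(p^m*q^n) by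
      rw [← pq_pow_eq p q m n i j hi.2 hj.2]; ring]
  · refine Finset.biUnion_congr rfl (fun i hi => ?_)
    rw [Finset.mem_Icc] at hi
    unfold H2P D2P
    rw [scaled_GC1]
    rw [show (p^(m-i)*q^n) * (2*p^i) = 2*(p^m*q^n) by
      rw [← pq_pow_eq p q m n i n hi.2 le_rfl]; simp; ring]
  · refine Finset.biUnion_congr rfl (fun j hj => ?_)
    rw [Finset.mem_Icc] at hj
    unfold H2Q D2Q
    rw [scaled_GC1]
    rw [show (p^m*q^(n-j)) * (2*q^j) = 2*(p^m*q^n) by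
      rw [← pq_pow_eq p q m n m j le_rfl hj.2]; simp; ring]

lemma Union2H_image (p q m n g y h : ℕ) (h01 : h = 0 ∨ h = 1) :
    Union2H p q m n g y h =
      (UnionH p q m n g y h).image (fun u => 2 * (u % (p^m*q^n))) := by
  unfold Union2H UnionH
  rw [Finset.image_union, Finset.image_union]
  simp only [Finset.biUnion_image]
  refine congrArg₂ (· ∪ ·) (congrArg₂ (· ∪ ·) ?_ ?_) ?_
  · refine Finset.biUnion_congr rfl (fun i hi => ?_)
    refine Finset.biUnion_congr rfl (fun j hj => ?_)
    rw [Finset.mem_Icc] at hi hj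
    unfold HPQ DPQ H2PQ D2PQ
    rw [scaled2_scaled_GC _ _ _ _ _ _ _ h01]
    rw [pq_pow_eq p q m n i j hi.2 hj.2]
  · refine Finset.biUnion_congr rfl (fun i hi => ?_)
    rw [Finset.mem_Icc] at hi
    unfold HP DP H2P D2P
    rw [scaled2_scaled_GC _ _ _ _ _ _ _ h01]
    rw [show (p^(m-i)*q^n) * (p^i) = p^m*q^n by
      rw [← pq_pow_eq p q m n i n hi.2 le_rfl]; simp; ring]
  · refine Finset.biUnion_congr rfl (fun j hj => ?_)
    rw [Finset.mem_Icc] at hj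
    unfold HQ DQ H2Q D2Q
    rw [scaled2_scaled_GC _ _ _ _ _ _ _ h01]
    rw [show (p^m*q^(n-j)) * (q^j) = p^m*q^n by
      rw [← pq_pow_eq p q m n m j le_rfl hj.2]; simp; ring]

lemma mu_injOn {g N : ℕ} (hg : Nat.Coprime g N) {x x' : ℕ} (hx : x < N) (hx' : x' < N)
    (h : g * x % N = g * x' % N) : x = x' := by
  have h1 : g * x ≡ g * x' [MOD N] := h
  have h2 : x ≡ x' [MOD N] := Nat.ModEq.cancel_left_of_coprime hg.symm h1
  rwa [Nat.ModEq, Nat.mod_eq_of_lt hx, Nat.mod_eq_of_lt hx'] at h2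

lemma phi_inj {P x x' : ℕ} (hP : Odd P) (hx : Odd x) (hx' : Odd x') (h1 : x < 2*P)
    (h2 : x' < 2*P) (h : 2 * (x % P) = 2 * (x' % P)) : x = x' := by
  have hP0 : 0 < P := hP.pos
  have hr : x % P = x' % P := by omega
  have e1 := Nat.div_add_mod x P
  have e2 := Nat.div_add_mod x' P
  have d1 : x / P < 2 := Nat.div_lt_of_lt_mul (by omega)
  have d2 : x' / P < 2 := Nat.div_lt_of_lt_mul (by omega)
  have ho := Nat.odd_iff.mp hx
  have ho' := Nat.odd_iff.mp hx'
  have hoP := Nat.odd_iff.mp hP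
  have d1' : x / P = 0 ∨ x / P = 1 :=
    Nat.le_one_iff_eq_zero_or_eq_one.mp (Nat.lt_succ_iff.mp d1)
  have d2' : x' / P = 0 ∨ x' / P = 1 :=
    Nat.le_one_iff_eq_zero_or_eq_one.mp (Nat.lt_succ_iff.mp d2)
  rcases d1' with h1' | h1' <;> rcases d2' with h2' | h2' <;>
    rw [h1'] at e1 <;> rw [h2'] at e2 <;> omega

noncomputable instance : Fintype F4 := Fintype.ofFinite F4

lemma F4_card : Fintype.card F4 = 4 := by
  have := GaloisField.card 2 2 (by norm_num)
  rw [Nat.card_eq_fintype_card] at this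
  simpa using this

lemma F4_sum_univ : ∑ x : F4, x = 0 := by
  classical
  obtain ⟨α, hα0, hα1⟩ : ∃ α : F4, α ≠ 0 ∧ α ≠ 1 := by
    have hcard : Fintype.card F4 = 4 := F4_card
    have hle : ({0,1} : Finset F4).card ≤ 2 :=
      (Finset.card_insert_le _ _).trans (by simp)
    have hsd := Finset.le_card_sdiff ({0,1} : Finset F4) Finset.univ
    rw [Finset.card_univ, hcard] at hsd
    have hpos : 0 < (Finset.univ \ ({0,1} : Finset F4)).card := by omega
    obtain ⟨α, hmem⟩ := Finset.card_pos.mp hpos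
    rw [Finset.mem_sdiff, Finset.mem_insert, Finset.mem_singleton] at hmem
    exact ⟨α, fun h => hmem.2 (Or.inl h), fun h => hmem.2 (Or.inr h)⟩
  have h2 : ∑ x : F4, α * x = ∑ x : F4, x :=
    Fintype.sum_equiv (Equiv.mulLeft₀ α hα0) _ _ (fun x => rfl)
  rw [← Finset.mul_sum] at h2
  have h4 : (α - 1) * (∑ x : F4, x) = 0 := by rw [sub_mul, h2, one_mul, sub_self]
  rcases mul_eq_zero.mp h4 with h | h
  · exact absurd (by rwa [sub_eq_zero] at h) hα1
  · exact h

lemma abcd_sum {a b c d : F4} (hab : a ≠ b) (hac : a ≠ c) (had : a ≠ d)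
    (hbc : b ≠ c) (hbd : b ≠ d) (hcd : c ≠ d) : a + b + c + d = 0 := by
  classical
  have hna : a ∉ ({b,c,d} : Finset F4) := by simp [hab, hac, had]
  have hnb : b ∉ ({c,d} : Finset F4) := by simp [hbc, hbd]
  have hnc : c ∉ ({d} : Finset F4) := by simp [hcd]
  have hcard : ({a,b,c,d} : Finset F4).card = 4 := by
    rw [Finset.card_insert_of_notMem hna, Finset.card_insert_of_notMem hnb,
      Finset.card_insert_of_notMem hnc, Finset.card_singleton]
  have huniv : ({a,b,c,d} : Finset F4) = Finset.univ :=
    Finset.eq_univ_of_card _ (by rw [hcard, F4_card])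
  have hsum : ∑ x ∈ ({a,b,c,d} : Finset F4), x = 0 := by rw [huniv]; exact F4_sum_univ
  rwa [Finset.sum_insert hna, Finset.sum_insert hnb, Finset.sum_insert hnc,
    Finset.sum_singleton, ← add_assoc, ← add_assoc] at hsum

theorem statement10
    (p q m n g y : ℕ)
    (hp : p.Prime) (hq : q.Prime) (hpq : p ≠ q) (hpodd : Odd p) (hqodd : Odd q)
    (hm : 1 ≤ m) (hn : 1 ≤ n) (hgodd : Odd g)
    (hgp : ∀ i, 1 ≤ i → i ≤ m → orderOf (g : ZMod (p ^ i)) = Nat.totient (p ^ i))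
    (hg2p : ∀ i, 1 ≤ i → i ≤ m → orderOf (g : ZMod (2 * p ^ i)) = Nat.totient (2 * p ^ i))
    (hgq : ∀ j, 1 ≤ j → j ≤ n → orderOf (g : ZMod (q ^ j)) = Nat.totient (q ^ j))
    (hg2q : ∀ j, 1 ≤ j → j ≤ n → orderOf (g : ZMod (2 * q ^ j)) = Nat.totient (2 * q ^ j))
    (hylt : y < 2 * (p ^ m * q ^ n))
    (hyg : y ≡ g [MOD 2 * p ^ m]) (hy1 : y ≡ 1 [MOD 2 * q ^ n])
    (a b c d e : F4)
    (hab : a ≠ b) (hac : a ≠ c) (had : a ≠ d) (hbc : b ≠ c) (hbd : b ≠ d) (hcd : c ≠ d)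
    (he : e ≠ 0)
    : (genPoly p q m n g y a b c d e).eval 1 = e ∧
      (genPoly p q m n g y a b c d e).eval 1 ≠ 0 := by
  classical
  have hP0 : 0 < p^m*q^n := Nat.mul_pos (pow_pos hp.pos m) (pow_pos hq.pos n)
  have hPodd : Odd (p^m*q^n) := (hpodd.pow).mul (hqodd.pow)
  -- facts about g and y
  have order_zero : ∀ Q : ℕ, 1 < Q → orderOf (0 : ZMod Q) = 0 := by
    intro Q hQ
    haveI : Fact (1 < Q) := ⟨hQ⟩
    rw [orderOf_eq_zero_iff]
    intro hf
    obtain ⟨k, hk, hk1⟩ := isOfFinOrder_iff_pow_eq_one.mp hf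
    rw [zero_pow hk.ne'] at hk1
    exact zero_ne_one hk1
  have hpg : ¬ p ∣ g := by
    intro hd
    have h1 := hgp 1 le_rfl hm
    have hzero : (g : ZMod (p^1)) = 0 := by
      rw [ZMod.natCast_eq_zero_iff]
      simpa using hd
    rw [hzero, order_zero _ (by simpa using hp.one_lt)] at h1
    have := Nat.totient_pos.mpr (pow_pos hp.pos 1)
    omega
  have hqg : ¬ q ∣ g := by
    intro hd
    have h1 := hgq 1 le_rfl hn
    have hzero : (g : ZMod (q^1)) = 0 := by
      rw [ZMod.natCast_eq_zero_iff]
      simpa using hd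
    rw [hzero, order_zero _ (by simpa using hq.one_lt)] at h1
    have := Nat.totient_pos.mpr (pow_pos hq.pos 1)
    omega
  have hpy : ¬ p ∣ y := by
    intro hd
    apply hpg
    have h1 : y ≡ g [MOD p] :=
      hyg.of_dvd ((dvd_pow_self p (by omega : m ≠ 0)).trans ⟨2, by ring⟩)
    exact Nat.modEq_zero_iff_dvd.mp (h1.symm.trans (Nat.modEq_zero_iff_dvd.mpr hd))
  have hqy : ¬ q ∣ y := by
    intro hd
    have h1 : y ≡ 1 [MOD q] :=
      hy1.of_dvd ((dvd_pow_self q (by omega : n ≠ 0)).trans ⟨2, by ring⟩)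
    have h2 : (1:ℕ) ≡ 0 [MOD q] := h1.symm.trans (Nat.modEq_zero_iff_dvd.mpr hd)
    exact not_prime_dvd_one hq (Nat.modEq_zero_iff_dvd.mp h2)
  have hyodd : Odd y := by
    have h1 : y ≡ 1 [MOD 2] := hy1.of_dvd ⟨q^n, rfl⟩
    rw [Nat.odd_iff]
    simpa [Nat.ModEq] using h1
  have hgN : Nat.Coprime g (2*(p^m*q^n)) := by
    have h2 : Nat.Coprime g 2 := by
      refine ((Nat.prime_two.coprime_iff_not_dvd).mpr ?_).symm
      intro hd
      obtain ⟨k, hk⟩ := hd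
      have := Nat.odd_iff.mp hgodd
      omega
    have hpc : Nat.Coprime g p := ((hp.coprime_iff_not_dvd).mpr hpg).symm
    have hqc : Nat.Coprime g q := ((hq.coprime_iff_not_dvd).mpr hqg).symm
    exact h2.mul_right ((hpc.pow_right m).mul_right (hqc.pow_right n))
  -- element facts
  have hAelt := UnionH_elt p q m n g y 0 hp hq hpq hpodd hqodd hgodd hyodd hpg hqg hpy hqy
    (Or.inl rfl)
  have hBelt := UnionH_elt p q m n g y 1 hp hq hpq hpodd hqodd hgodd hyodd hpg hqg hpy hqy
    (Or.inr rfl)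
  have hdisj := UnionH_disj01 p q m n g y hp hq hpq hpodd hqodd hm hn hpg hqg hpy hqy
    hg2p hg2q hy1
  have hBA := UnionH_one p q m n g y
  have hCA := Union2H_image p q m n g y 0 (Or.inl rfl)
  have hDB := Union2H_image p q m n g y 1 (Or.inr rfl)
  -- cardinalities
  have hcardB : (UnionH p q m n g y 1).card = (UnionH p q m n g y 0).card := by
    rw [hBA]
    exact Finset.card_image_of_injOn (fun x hx x' hx' hxx =>
      mu_injOn hgN (hAelt x hx).2.1 (hAelt x' hx').2.1 hxx)
  have hcardC : (Union2H p q m n g y 0).card = (UnionH p q m n g y 0).card := by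
    rw [hCA]
    exact Finset.card_image_of_injOn (fun x hx x' hx' hxx =>
      phi_inj hPodd (hAelt x hx).1 (hAelt x' hx').1 (hAelt x hx).2.1 (hAelt x' hx').2.1 hxx)
  have hcardD : (Union2H p q m n g y 1).card = (UnionH p q m n g y 0).card := by
    rw [hDB]
    rw [Finset.card_image_of_injOn (fun x hx x' hx' hxx =>
      phi_inj hPodd (hBelt x hx).1 (hBelt x' hx').1 (hBelt x hx).2.1 (hBelt x' hx').2.1 hxx)]
    exact hcardB
  -- element facts for the even classes
  have hCelt : ∀ h' (hel : ∀ u ∈ UnionH p q m n g y h',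
        Odd u ∧ u < 2*(p^m*q^n) ∧ u ≠ p^m*q^n),
      ∀ u ∈ (UnionH p q m n g y h').image (fun u => 2*(u % (p^m*q^n))),
        Even u ∧ u < 2*(p^m*q^n) ∧ u ≠ 0 := by
    intro h' hel u hu
    rw [Finset.mem_image] at hu
    obtain ⟨x, hx, rfl⟩ := hu
    obtain ⟨hxodd, hxlt, hxP⟩ := hel x hx
    have hmod : x % (p^m*q^n) < p^m*q^n := Nat.mod_lt _ hP0
    refine ⟨⟨x % (p^m*q^n), by ring⟩, by omega, ?_⟩
    intro h0
    have hdvd : (p^m*q^n) ∣ x := Nat.dvd_of_mod_eq_zero (by omega)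
    obtain ⟨k, hk⟩ := hdvd
    have hk2 : k < 2 := by
      by_contra hge
      push_neg at hge
      have h2 : (p^m*q^n)*2 ≤ (p^m*q^n)*k := Nat.mul_le_mul_left _ hge
      omega
    have hx2 := Nat.odd_iff.mp hxodd
    interval_cases k
    · omega
    · exact hxP (by omega)
  -- disjointness of even classes
  have hdisjCD : ∀ u, u ∈ Union2H p q m n g y 0 → u ∈ Union2H p q m n g y 1 → False := by
    intro u h0 h1
    rw [hCA, Finset.mem_image] at h0
    rw [hDB, Finset.mem_image] at h1
    obtain ⟨x, hx, hxe⟩ := h0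
    obtain ⟨x', hx', hx'e⟩ := h1
    have hxx : x = x' := phi_inj hPodd (hAelt x hx).1 (hBelt x' hx').1
      (hAelt x hx).2.1 (hBelt x' hx').2.1 (hxe.trans hx'e.symm)
    exact hdisj x hx (hxx ▸ hx')
  -- eval at 1 is the sum of the sequence values
  have heval : (genPoly p q m n g y a b c d e).eval 1 =
      ∑ u ∈ Finset.range (2*(p^m*q^n)), seqS p q m n g y a b c d e u := by
    rw [genPoly, Polynomial.eval_finset_sum]
    exact Finset.sum_congr rfl (fun u hu => by simp)
  -- values of the sequence on each class
  have valP : seqS p q m n g y a b c d e (p^m*q^n) = e := by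
    simp only [seqS]
    rw [Nat.mod_eq_of_lt (by omega)]
    rw [if_neg (by omega), if_pos rfl]
  have valA : ∀ u ∈ UnionH p q m n g y 0, seqS p q m n g y a b c d e u = a := by
    intro u hu
    obtain ⟨ho, hlt, hP⟩ := hAelt u hu
    have h2 := Nat.odd_iff.mp ho
    simp only [seqS]
    rw [Nat.mod_eq_of_lt hlt, if_neg (by omega), if_neg hP, if_pos hu]
  have valB : ∀ u ∈ UnionH p q m n g y 1, seqS p q m n g y a b c d e u = b := by
    intro u hu
    obtain ⟨ho, hlt, hP⟩ := hBelt u hu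
    have h2 := Nat.odd_iff.mp ho
    simp only [seqS]
    rw [Nat.mod_eq_of_lt hlt, if_neg (by omega), if_neg hP,
      if_neg (fun h => hdisj u h hu), if_pos hu]
  have valC : ∀ u ∈ Union2H p q m n g y 0, seqS p q m n g y a b c d e u = c := by
    intro u hu
    have hu' := hu
    rw [hCA] at hu'
    obtain ⟨hev, hlt, h0⟩ := hCelt 0 hAelt u hu'
    have h2 := Nat.even_iff.mp hev
    simp only [seqS]
    rw [Nat.mod_eq_of_lt hlt, if_neg h0,
      if_neg (by have := Nat.odd_iff.mp hPodd; omega),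
      if_neg (fun h => by have := Nat.odd_iff.mp (hAelt u h).1; omega),
      if_neg (fun h => by have := Nat.odd_iff.mp (hBelt u h).1; omega), if_pos hu]
  have valD : ∀ u ∈ Union2H p q m n g y 1, seqS p q m n g y a b c d e u = d := by
    intro u hu
    have hu' := hu
    rw [hDB] at hu'
    obtain ⟨hev, hlt, h0⟩ := hCelt 1 hBelt u hu'
    have h2 := Nat.even_iff.mp hev
    simp only [seqS]
    rw [Nat.mod_eq_of_lt hlt, if_neg h0,
      if_neg (by have := Nat.odd_iff.mp hPodd; omega),
      if_neg (fun h => by have := Nat.odd_iff.mp (hAelt u h).1; omega),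
      if_neg (fun h => by have := Nat.odd_iff.mp (hBelt u h).1; omega),
      if_neg (fun h => hdisjCD u h hu), if_pos hu]
  -- the support set
  have hdisjAB : Disjoint (UnionH p q m n g y 0) (UnionH p q m n g y 1) :=
    Finset.disjoint_left.mpr (fun {u} h0 h1 => absurd (hdisj u h0 h1) (not_false))
  have hdisjCD' : Disjoint (Union2H p q m n g y 0) (Union2H p q m n g y 1) :=
    Finset.disjoint_left.mpr (fun {u} h0 h1 => absurd (hdisjCD u h0 h1) (not_false))
  have hoddAB : ∀ u ∈ UnionH p q m n g y 0 ∪ UnionH p q m n g y 1, Odd u := by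
    intro u hu
    rcases Finset.mem_union.mp hu with h | h
    · exact (hAelt u h).1
    · exact (hBelt u h).1
  have hevCD : ∀ u ∈ Union2H p q m n g y 0 ∪ Union2H p q m n g y 1, Even u := by
    intro u hu
    rcases Finset.mem_union.mp hu with h | h
    · exact (hCelt 0 hAelt u (by rwa [hCA] at h)).1
    · exact (hCelt 1 hBelt u (by rwa [hDB] at h)).1
  have hdisjbig : Disjoint (UnionH p q m n g y 0 ∪ UnionH p q m n g y 1)
      (Union2H p q m n g y 0 ∪ Union2H p q m n g y 1) := by
    rw [Finset.disjoint_left]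
    intro u h1 h2
    have := Nat.odd_iff.mp (hoddAB u h1)
    have := Nat.even_iff.mp (hevCD u h2)
    omega
  set T := (UnionH p q m n g y 0 ∪ UnionH p q m n g y 1) ∪
      (Union2H p q m n g y 0 ∪ Union2H p q m n g y 1) with hTdef
  have hPT : p^m*q^n ∉ T := by
    intro hmem
    rw [hTdef, Finset.mem_union] at hmem
    rcases hmem with h | h
    · rcases Finset.mem_union.mp h with h | h
      · exact (hAelt _ h).2.2 rfl
      · exact (hBelt _ h).2.2 rfl
    · have := Nat.even_iff.mp (hevCD _ h)
      have := Nat.odd_iff.mp hPodd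
      omega
  have hsub : insert (p^m*q^n) T ⊆ Finset.range (2*(p^m*q^n)) := by
    intro u hu
    rw [Finset.mem_insert] at hu
    rw [Finset.mem_range]
    rcases hu with rfl | hu
    · omega
    · rw [hTdef, Finset.mem_union] at hu
      rcases hu with h | h
      · rcases Finset.mem_union.mp h with h | h
        · exact (hAelt _ h).2.1
        · exact (hBelt _ h).2.1
      · rcases Finset.mem_union.mp h with h | h
        · exact (hCelt 0 hAelt _ (by rwa [hCA] at h)).2.1
        · exact (hCelt 1 hBelt _ (by rwa [hDB] at h)).2.1
  have hzero_off : ∀ u ∈ Finset.range (2*(p^m*q^n)), u ∉ insert (p^m*q^n) T →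
      seqS p q m n g y a b c d e u = 0 := by
    intro u hu hnu
    rw [Finset.mem_range] at hu
    rw [Finset.mem_insert, hTdef] at hnu
    push_neg at hnu
    obtain ⟨hne, hT⟩ := hnu
    simp only [Finset.mem_union, not_or] at hT
    obtain ⟨⟨hA, hB⟩, hC, hD⟩ := hT
    simp only [seqS]
    rw [Nat.mod_eq_of_lt hu]
    by_cases h0 : u = 0
    · rw [if_pos h0]
    · rw [if_neg h0, if_neg hne, if_neg hA, if_neg hB, if_neg hC, if_neg hD]
  have hsum : ∑ u ∈ Finset.range (2*(p^m*q^n)), seqS p q m n g y a b c d e u = e := by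
    rw [← Finset.sum_subset hsub hzero_off]
    rw [Finset.sum_insert hPT, valP]
    rw [hTdef, Finset.sum_union hdisjbig, Finset.sum_union hdisjAB, Finset.sum_union hdisjCD']
    rw [Finset.sum_congr rfl valA, Finset.sum_congr rfl valB, Finset.sum_congr rfl valC,
      Finset.sum_congr rfl valD]
    rw [Finset.sum_const, Finset.sum_const, Finset.sum_const, Finset.sum_const]
    rw [hcardB, hcardC, hcardD]
    rw [← smul_add, ← smul_add, ← smul_add]
    have habcd : a + b + (c + d) = 0 := by
      rw [← add_assoc]
      exact abcd_sum hab hac had hbc hbd hcd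
    rw [habcd, smul_zero, add_zero]
  have hfin := heval.trans hsum
  exact ⟨hfin, by rw [hfin]; exact he⟩

end
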